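/- Let S be a semigroup with finite R-height, let A = aS^1 be a principal right ideal of S, let I be a set with |I| ≥ 2, and let T = B(S, I) be the Brandt extension of S by I. Fix an element 1 ∈ I and consider the principal right ideal B = (1, a, 1)T^1 of T. Then H_R(T) = H_R(S) + 1 and H_R(B) = H_R(A) + 2. -/

import Mathlib

/-!
Common definitions: Green's preorder/relation computed inside a subsemigroup,
chains of R-classes, R-height, bi-ideals, one- and two-sided ideals,
the kernel, and completely simple (sub)semigroups.
-/

variable {S : Type*}

/-- Green's preorder `≤_B` computed with multipliers from `B`:
`a ≤_B b` iff `a ∈ bB¹`, i.e. `a = b` or `a = b*s` for some `s ∈ B`. -/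
def RLe [Semigroup S] (B : Set S) (a b : S) : Prop :=
  a = b ∨ ∃ s ∈ B, a = b * s

/-- The strict version `<_B` of Green's preorder. -/
def RLt [Semigroup S] (B : Set S) (a b : S) : Prop :=
  RLe B a b ∧ ¬ RLe B b a

/-- Green's relation `R` computed with multipliers from `B`. -/
def REquiv [Semigroup S] (B : Set S) (a b : S) : Prop :=
  RLe B a b ∧ RLe B b a

/-- There is a chain of `n` (distinct, linearly ordered) `R`-classes of the
subsemigroup `B`, with all representatives lying in `C`. -/
def HasRChain [Semigroup S] (B C : Set S) (n : ℕ) : Prop :=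
  ∃ f : Fin n → S, (∀ i, f i ∈ C) ∧ ∀ i j : Fin n, i < j → RLt B (f i) (f j)

/-- There is a chain of `n` `R`-classes of `S`, each of which is contained in `C`. -/
def HasRChainInside [Semigroup S] (C : Set S) (n : ℕ) : Prop :=
  ∃ f : Fin n → S, (∀ i, ∀ x : S, REquiv Set.univ x (f i) → x ∈ C) ∧
    ∀ i j : Fin n, i < j → RLt (Set.univ : Set S) (f i) (f j)

/-- The `R`-height of the subsemigroup `B`: the supremum of the lengths
(cardinalities) of chains of `R_B`-classes. -/
noncomputable def RHeight [Semigroup S] (B : Set S) : ℕ∞ :=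
  sSup ((fun n : ℕ => (n : ℕ∞)) '' {n : ℕ | HasRChain B B n})

/-- A bi-ideal of `S`: a nonempty subset `B` with `BS¹B ⊆ B`. -/
def IsBiIdeal [Semigroup S] (B : Set S) : Prop :=
  B.Nonempty ∧ ∀ b ∈ B, ∀ c ∈ B, b * c ∈ B ∧ ∀ s : S, b * s * c ∈ B

/-- A right ideal of `S`: a nonempty subset `A` with `AS ⊆ A`. -/
def IsRightIdeal [Semigroup S] (A : Set S) : Prop :=
  A.Nonempty ∧ ∀ a ∈ A, ∀ s : S, a * s ∈ A

/-- A left ideal of `S`: a nonempty subset `A` with `SA ⊆ A`. -/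
def IsLeftIdeal [Semigroup S] (A : Set S) : Prop :=
  A.Nonempty ∧ ∀ a ∈ A, ∀ s : S, s * a ∈ A

/-- A two-sided ideal of `S`. -/
def IsTwoSidedIdealSet [Semigroup S] (A : Set S) : Prop :=
  IsRightIdeal A ∧ IsLeftIdeal A

/-- `K` is the kernel (minimum two-sided ideal) of `S`. -/
def IsKernel [Semigroup S] (K : Set S) : Prop :=
  IsTwoSidedIdealSet K ∧ ∀ A : Set S, IsTwoSidedIdealSet A → K ⊆ A

/-- A right ideal of the subsemigroup `K` of `S`. -/
def IsRightIdealIn [Semigroup S] (K A : Set S) : Prop :=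
  A.Nonempty ∧ A ⊆ K ∧ ∀ a ∈ A, ∀ k ∈ K, a * k ∈ A

/-- A left ideal of the subsemigroup `K` of `S`. -/
def IsLeftIdealIn [Semigroup S] (K A : Set S) : Prop :=
  A.Nonempty ∧ A ⊆ K ∧ ∀ a ∈ A, ∀ k ∈ K, k * a ∈ A

/-- A two-sided ideal of the subsemigroup `K` of `S`. -/
def IsIdealIn [Semigroup S] (K A : Set S) : Prop :=
  IsRightIdealIn K A ∧ IsLeftIdealIn K A

/-- The subsemigroup `K` of `S` is completely simple: it is simple (has no
proper two-sided ideals) and possesses both a minimal right ideal and a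
minimal left ideal. -/
def IsCompletelySimple [Semigroup S] (K : Set S) : Prop :=
  K.Nonempty ∧ (∀ a ∈ K, ∀ b ∈ K, a * b ∈ K) ∧
  (∀ A : Set S, IsIdealIn K A → A = K) ∧
  (∃ A : Set S, IsRightIdealIn K A ∧ ∀ A' : Set S, IsRightIdealIn K A' → A' ⊆ A → A' = A) ∧
  (∃ A : Set S, IsLeftIdealIn K A ∧ ∀ A' : Set S, IsLeftIdealIn K A' → A' ⊆ A → A' = A)

/-- The Brandt extension `𝓑(S, I)`: universe `(I × S × I) ∪ {0}`, where `zero`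
is the adjoined zero element and `elt i s j` is the triple `(i, s, j)`. -/
inductive Brandt (S I : Type*) where
  | zero : Brandt S I
  | elt : I → S → I → Brandt S I

namespace Brandt

variable {I : Type*} [Semigroup S] [DecidableEq I]

/-- Multiplication of the Brandt extension:
`(i,s,j)(k,t,l) = (i,st,l)` if `j = k`, and `0` otherwise; `0` is a zero element. -/
instance : Mul (Brandt S I) :=
  ⟨fun x y =>
    match x, y with
    | elt i s j, elt k t l => if j = k then elt i (s * t) l else zero
    | _, _ => zero⟩

theorem zero_mul' (x : Brandt S I) : (zero : Brandt S I) * x = zero := by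
  cases x <;> rfl

theorem mul_zero' (x : Brandt S I) : x * (zero : Brandt S I) = zero := by
  cases x <;> rfl

theorem elt_mul_elt (i : I) (s : S) (j k : I) (t : S) (l : I) :
    (elt i s j : Brandt S I) * elt k t l =
      if j = k then elt i (s * t) l else zero := rfl

instance : Semigroup (Brandt S I) where
  mul_assoc a b c := by
    rcases a with _ | ⟨i, s, j⟩ <;> rcases b with _ | ⟨k, t, l⟩ <;>
      rcases c with _ | ⟨m, u, p⟩ <;>
      simp only [zero_mul', mul_zero', elt_mul_elt]
    by_cases hjk : j = k <;> by_cases hlm : l = m <;>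
      simp [elt_mul_elt, zero_mul', mul_zero', hjk, hlm, mul_assoc]

end Brandt

section AuxChains

variable [Semigroup S]

lemma hasRChain_zero' (B C : Set S) : HasRChain B C 0 :=
  ⟨Fin.elim0, fun i => i.elim0, fun i => i.elim0⟩

lemma hasRChain_mono' {B C : Set S} {m n : ℕ} (h : m ≤ n) (hc : HasRChain B C n) :
    HasRChain B C m := by
  obtain ⟨f, hmem, hch⟩ := hc
  refine ⟨f ∘ Fin.castLE h, fun i => hmem _, fun i j hij => hch _ _ ?_⟩
  exact Fin.lt_def.mpr (Fin.lt_def.mp hij)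

/-- Prepend an element strictly below a whole chain. -/
lemma hasRChain_cons {B C : Set S} {n : ℕ} {g : Fin n → S} (c : S) (hc : c ∈ C)
    (hmem : ∀ i, g i ∈ C) (hch : ∀ i j : Fin n, i < j → RLt B (g i) (g j))
    (hlt : ∀ i, RLt B c (g i)) :
    HasRChain B C (n + 1) := by
  refine ⟨Fin.cases c g, ?_, ?_⟩
  · intro i
    induction i using Fin.cases with
    | zero => simp only [Fin.cases_zero]; exact hc
    | succ p => simp only [Fin.cases_succ]; exact hmem p
  · intro i j hij
    induction j using Fin.cases with
    | zero => exact absurd hij (Fin.not_lt_zero _)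
    | succ q =>
      induction i using Fin.cases with
      | zero => simp only [Fin.cases_zero, Fin.cases_succ]; exact hlt q
      | succ p =>
        have hpq : p < q := by
          have := Fin.lt_def.mp hij
          simp only [Fin.val_succ] at this
          exact Fin.lt_def.mpr (by omega)
        simp only [Fin.cases_succ]; exact hch p q hpq

end AuxChains

/-- Shifting the supremum of chain lengths by `k`. -/
lemma sup_shift (P Q : ℕ → Prop) (k : ℕ)
    (hP0 : P 0)
    (hPdc : ∀ {m n : ℕ}, m ≤ n → P n → P m)
    (h1 : ∀ n, P n → Q (n + k))
    (h2 : ∀ n, Q (n + k) → P n) :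
    sSup ((fun n : ℕ => (n : ℕ∞)) '' {n | Q n}) =
      sSup ((fun n : ℕ => (n : ℕ∞)) '' {n | P n}) + (k : ℕ∞) := by
  classical
  apply le_antisymm
  · apply sSup_le
    rintro x ⟨n, hn, rfl⟩
    rcases le_or_gt n k with h | h
    · calc (n : ℕ∞) ≤ (k : ℕ∞) := by exact_mod_cast h
        _ ≤ _ + (k : ℕ∞) := le_add_self
    · obtain ⟨m, rfl⟩ : ∃ m, n = m + k := ⟨n - k, by omega⟩
      have hm : (m : ℕ∞) ≤ sSup ((fun n : ℕ => (n : ℕ∞)) '' {n | P n}) :=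
        le_sSup ⟨m, h2 m hn, rfl⟩
      calc ((m + k : ℕ) : ℕ∞) = (m : ℕ∞) + (k : ℕ∞) := by push_cast; rfl
        _ ≤ _ + (k : ℕ∞) := add_le_add_left hm _
  · by_cases hall : ∀ n, P n
    · have htop : ∀ n : ℕ, (n : ℕ∞) ≤ sSup ((fun n : ℕ => (n : ℕ∞)) '' {n | Q n}) := by
        intro n
        refine le_trans ?_ (le_sSup ⟨n + k, h1 n (hall n), rfl⟩)
        show (n : ℕ∞) ≤ ((n + k : ℕ) : ℕ∞)
        exact_mod_cast Nat.le_add_right n k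
      have hQtop : sSup ((fun n : ℕ => (n : ℕ∞)) '' {n | Q n}) = ⊤ := by
        by_contra hne
        obtain ⟨m, hm⟩ := WithTop.ne_top_iff_exists.mp hne
        have h1' := htop (m + 1)
        rw [← hm] at h1'
        have h2' : ((m + 1 : ℕ) : ℕ∞) ≤ ((m : ℕ) : ℕ∞) := h1'
        have : m + 1 ≤ m := by exact_mod_cast h2'
        omega
      rw [hQtop]; exact le_top
    · push_neg at hall
      obtain ⟨N, hN⟩ := hall
      set M := Nat.findGreatest P N with hMdef
      have hPM : P M := Nat.findGreatest_spec (Nat.zero_le N) hP0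
      have hbound : ∀ n, P n → n ≤ M := by
        intro n hn
        rcases le_or_gt n N with h | h
        · exact Nat.le_findGreatest h hn
        · exact absurd (hPdc h.le hn) hN
      have hle : sSup ((fun n : ℕ => (n : ℕ∞)) '' {n | P n}) ≤ (M : ℕ∞) := by
        apply sSup_le
        rintro x ⟨n, hn, rfl⟩
        show (n : ℕ∞) ≤ (M : ℕ∞)
        exact_mod_cast hbound n hn
      have hfin : ((M + k : ℕ) : ℕ∞) ≤ sSup ((fun n : ℕ => (n : ℕ∞)) '' {n | Q n}) :=
        le_sSup ⟨M + k, h1 M hPM, rfl⟩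
      calc sSup ((fun n : ℕ => (n : ℕ∞)) '' {n | P n}) + (k : ℕ∞)
          ≤ (M : ℕ∞) + (k : ℕ∞) := add_le_add_left hle _
        _ = ((M + k : ℕ) : ℕ∞) := by push_cast; rfl
        _ ≤ _ := hfin

section BrandtChains

variable {I : Type*} [Semigroup S] [DecidableEq I]

open Brandt

lemma zero_rlt_elt {B : Set (Brandt S I)} (hz : Brandt.zero ∈ B) (i : I) (s : S) (j : I) :
    RLt B Brandt.zero (Brandt.elt i s j) := by
  constructor
  · exact Or.inr ⟨Brandt.zero, hz, (Brandt.mul_zero' _).symm⟩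
  · rintro (h | ⟨m, -, h⟩)
    · exact nomatch h
    · rw [Brandt.zero_mul'] at h; exact nomatch h

lemma eq_zero_of_rle_zero {B : Set (Brandt S I)} {y : Brandt S I}
    (h : RLe B y Brandt.zero) : y = Brandt.zero := by
  rcases h with h | ⟨m, -, h⟩
  · exact h
  · rwa [Brandt.zero_mul'] at h

/-- Part 1, lower bound: an `S`-chain of length `n` gives a `T`-chain of length `n+1`. -/
lemma chainS_to_T (one : I) (n : ℕ) (h : HasRChain (Set.univ : Set S) Set.univ n) :
    HasRChain (Set.univ : Set (Brandt S I)) Set.univ (n + 1) := by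
  obtain ⟨g, -, hch⟩ := h
  refine hasRChain_cons Brandt.zero (Set.mem_univ _) (g := fun i => Brandt.elt one (g i) one)
    (fun _ => Set.mem_univ _) ?_ (fun i => zero_rlt_elt (Set.mem_univ _) _ _ _)
  intro i j hij
  have hS := hch i j hij
  show RLt (Set.univ) (Brandt.elt one (g i) one) (Brandt.elt one (g j) one)
  constructor
  · rcases hS.1 with h | ⟨u, -, h⟩
    · exact Or.inl (by rw [h])
    · exact Or.inr ⟨Brandt.elt one u one, Set.mem_univ _, by
        rw [Brandt.elt_mul_elt, if_pos rfl, ← h]⟩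
  · rintro (h | ⟨t, -, h⟩)
    · simp only [Brandt.elt.injEq] at h
      exact hS.2 (Or.inl h.2.1)
    · cases t with
      | zero => rw [Brandt.mul_zero'] at h; exact nomatch h
      | elt k u l =>
        rw [Brandt.elt_mul_elt] at h
        split_ifs at h with hk
        simp only [Brandt.elt.injEq] at h
        exact hS.2 (Or.inr ⟨u, Set.mem_univ _, h.2.1⟩)

/-- Part 1, upper bound: a `T`-chain of length `n+1` gives an `S`-chain of length `n`. -/
lemma chainT_to_S (n : ℕ)
    (h : HasRChain (Set.univ : Set (Brandt S I)) Set.univ (n + 1)) :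
    HasRChain (Set.univ : Set S) Set.univ n := by
  obtain ⟨f, -, hch⟩ := h
  have hne : ∀ i : Fin n, ∃ p s q, f i.succ = Brandt.elt p s q := by
    intro i
    cases hf : f i.succ with
    | elt p s q => exact ⟨p, s, q, rfl⟩
    | zero =>
      have h0 := hch 0 i.succ (Fin.lt_def.mpr (by simp [Fin.val_succ]))
      rw [hf] at h0
      have hz : f 0 = Brandt.zero := eq_zero_of_rle_zero h0.1
      exact absurd (show RLe (Set.univ) Brandt.zero (f 0) from Or.inl hz.symm) h0.2
  choose p s q hf using hne
  refine ⟨s, fun _ => trivial, ?_⟩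
  intro i j hij
  have hT := hch i.succ j.succ (Fin.lt_def.mpr (by
    simp only [Fin.val_succ]; exact Nat.add_lt_add_right (Fin.lt_def.mp hij) 1))
  rw [hf i, hf j] at hT
  have hmain : p i = p j ∧ ∃ u', s i = s j * u' := by
    rcases hT.1 with h | ⟨t, -, h⟩
    · exact absurd (Or.inl h.symm) hT.2
    · cases t with
      | zero => rw [Brandt.mul_zero'] at h; exact nomatch h
      | elt k u l =>
        rw [Brandt.elt_mul_elt] at h
        split_ifs at h with hk
        simp only [Brandt.elt.injEq] at h
        exact ⟨h.1, u, h.2.1⟩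
  obtain ⟨hp, u', hu'⟩ := hmain
  constructor
  · exact Or.inr ⟨u', Set.mem_univ _, hu'⟩
  · rintro (h | ⟨u, -, h⟩)
    · -- s j = s i
      apply hT.2
      refine Or.inr ⟨Brandt.elt (q i) u' (q j), Set.mem_univ _, ?_⟩
      rw [Brandt.elt_mul_elt, if_pos rfl]
      have hsi : s i * u' = s j := by
        rw [h] at hu'
        rw [h]; exact hu'.symm
      simp only [Brandt.elt.injEq]
      exact ⟨hp.symm, hsi.symm, trivial⟩
    · -- s j = s i * u
      apply hT.2
      refine Or.inr ⟨Brandt.elt (q i) u (q j), Set.mem_univ _, ?_⟩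
      rw [Brandt.elt_mul_elt, if_pos rfl]
      simp only [Brandt.elt.injEq]
      exact ⟨hp.symm, h, trivial⟩

end BrandtChains

section PrincipalChains

variable {I : Type*} [Semigroup S] [DecidableEq I] (a : S) (one : I)

open Brandt

/-- The principal right ideal `A = aS¹` of `S`. -/
def Aset : Set S := {x : S | x = a ∨ ∃ s : S, x = a * s}

/-- The principal right ideal `B = (one,a,one)T¹` of `T = 𝓑(S,I)`. -/
def Bset : Set (Brandt S I) :=
  {x : Brandt S I | x = Brandt.elt one a one ∨ ∃ t : Brandt S I, x = Brandt.elt one a one * t}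

lemma zero_mem_Bset : (Brandt.zero : Brandt S I) ∈ Bset a one :=
  Or.inr ⟨Brandt.zero, (Brandt.mul_zero' _).symm⟩

lemma memB_aS (s : S) (l : I) : (Brandt.elt one (a * s) l : Brandt S I) ∈ Bset a one :=
  Or.inr ⟨Brandt.elt one s l, by rw [Brandt.elt_mul_elt, if_pos rfl]⟩

lemma memB_A_mul {u : S} (hu : u ∈ Aset a) (w : S) (l : I) :
    (Brandt.elt one (u * w) l : Brandt S I) ∈ Bset a one := by
  rcases hu with h | ⟨s, h⟩
  · rw [h]; exact memB_aS a one w l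
  · rw [h, mul_assoc]; exact memB_aS a one (s * w) l

lemma memB_of_A_one {u : S} (hu : u ∈ Aset a) :
    (Brandt.elt one u one : Brandt S I) ∈ Bset a one := by
  rcases hu with h | ⟨s, h⟩
  · rw [h]; exact Or.inl rfl
  · rw [h]; exact memB_aS a one s one

lemma memB_cases {m : Brandt S I} (hm : m ∈ Bset a one) :
    m = Brandt.zero ∨ m = Brandt.elt one a one ∨ ∃ u l, m = Brandt.elt one (a * u) l := by
  rcases hm with rfl | ⟨t, rfl⟩
  · exact Or.inr (Or.inl rfl)
  · cases t with
    | zero => rw [Brandt.mul_zero']; exact Or.inl rfl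
    | elt k u l =>
      rw [Brandt.elt_mul_elt]
      split_ifs with hk
      · exact Or.inr (Or.inr ⟨u, l, rfl⟩)
      · exact Or.inl rfl

/-- Below an element `elt i x j` with `j ≠ one`, there is (w.r.t. `≤_B`) only
itself and `zero`. -/
lemma rle_snd_ne {y : Brandt S I} {i : I} {x : S} {j : I} (hj : ¬ j = one)
    (h : RLe (Bset a one) y (Brandt.elt i x j)) :
    y = Brandt.elt i x j ∨ y = Brandt.zero := by
  rcases h with h | ⟨m, hm, h⟩
  · exact Or.inl h
  · rcases memB_cases a one hm with rfl | rfl | ⟨u, l, rfl⟩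
    · right; rwa [Brandt.mul_zero'] at h
    · right; rwa [Brandt.elt_mul_elt, if_neg hj] at h
    · right; rwa [Brandt.elt_mul_elt, if_neg hj] at h

/-- Transfer a strict `A`-relation to the corresponding `elt one _ one` elements. -/
lemma rlt_A_to_B {x y : S} (h : RLt (Aset a) x y) :
    RLt (Bset a one) (Brandt.elt one x one : Brandt S I) (Brandt.elt one y one) := by
  constructor
  · rcases h.1 with rfl | ⟨u, hu, rfl⟩
    · exact Or.inl rfl
    · exact Or.inr ⟨Brandt.elt one u one, memB_of_A_one a one hu, by
        rw [Brandt.elt_mul_elt, if_pos rfl]⟩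
  · rintro (h' | ⟨m, hm, h'⟩)
    · simp only [Brandt.elt.injEq] at h'
      exact h.2 (Or.inl h'.2.1)
    · rcases memB_cases a one hm with rfl | rfl | ⟨u, l, rfl⟩
      · rw [Brandt.mul_zero'] at h'; exact nomatch h'
      · rw [Brandt.elt_mul_elt, if_pos rfl] at h'
        simp only [Brandt.elt.injEq] at h'
        exact h.2 (Or.inr ⟨a, Or.inl rfl, h'.2.1⟩)
      · rw [Brandt.elt_mul_elt, if_pos rfl] at h'
        simp only [Brandt.elt.injEq] at h'
        exact h.2 (Or.inr ⟨a * u, Or.inr ⟨u, rfl⟩, h'.2.1⟩)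

/-- Part 2, lower bound. -/
lemma chainA_to_B {j0 : I} (hj : ¬ j0 = one) (n : ℕ)
    (h : HasRChain (Aset a) (Aset a) n) :
    HasRChain (Bset a one) (Bset a one : Set (Brandt S I)) (n + 2) := by
  cases n with
  | zero =>
    -- chain : zero < elt one (a*a) j0
    refine hasRChain_cons Brandt.zero (zero_mem_Bset a one)
      (g := fun _ : Fin 1 => Brandt.elt one (a * a) j0)
      (fun _ => memB_aS a one a j0) ?_
      (fun i => zero_rlt_elt (zero_mem_Bset a one) _ _ _)
    intro i j hij
    have hi := i.isLt; have hjlt := j.isLt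
    exact absurd (Fin.lt_def.mp hij) (by omega)
  | succ m =>
    obtain ⟨g, hmem, hch⟩ := h
    -- the top part : elt one (g i) one
    have htop : ∀ i j : Fin (m + 1), i < j →
        RLt (Bset a one) (Brandt.elt one (g i) one : Brandt S I)
          (Brandt.elt one (g j) one) := fun i j hij => rlt_A_to_B a one (hch i j hij)
    -- middle element
    set mid : Brandt S I := Brandt.elt one (g 0 * (a * a)) j0 with hmid
    have hmidmem : mid ∈ Bset a one := memB_A_mul a one (hmem 0) (a * a) j0
    have hmidlt : ∀ i : Fin (m + 1),
        RLt (Bset a one) mid (Brandt.elt one (g i) one : Brandt S I) := by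
      intro i
      constructor
      · -- mid ≤ elt one (g i) one
        have hle : RLe (Aset a) (g 0) (g i) := by
          rcases eq_or_lt_of_le (Fin.zero_le i) with h0 | h0
          · exact Or.inl (by rw [← h0])
          · exact (hch 0 i h0).1
        rcases hle with h0 | ⟨u, hu, h0⟩
        · refine Or.inr ⟨Brandt.elt one (a * a) j0, memB_aS a one a j0, ?_⟩
          rw [Brandt.elt_mul_elt, if_pos rfl, hmid, h0]
        · refine Or.inr ⟨Brandt.elt one (u * (a * a)) j0, memB_A_mul a one hu (a * a) j0, ?_⟩
          rw [Brandt.elt_mul_elt, if_pos rfl, hmid, h0, mul_assoc]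
      · intro hcon
        rcases rle_snd_ne a one hj hcon with h' | h'
        · simp only [Brandt.elt.injEq] at h'
          exact hj h'.2.2.symm
        · exact nomatch h'
    refine hasRChain_cons Brandt.zero (zero_mem_Bset a one)
      (g := Fin.cases mid (fun i => Brandt.elt one (g i) one)) ?_ ?_ ?_
    · intro i
      induction i using Fin.cases with
      | zero => simpa using hmidmem
      | succ p => simpa using memB_of_A_one a one (hmem p)
    · intro i j hij
      induction j using Fin.cases with
      | zero => exact absurd hij (Fin.not_lt_zero _)
      | succ q =>
        induction i using Fin.cases with
        | zero => simp only [Fin.cases_zero, Fin.cases_succ]; exact hmidlt q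
        | succ p =>
          have hpq : p < q := by
            have := Fin.lt_def.mp hij
            simp only [Fin.val_succ] at this
            exact Fin.lt_def.mpr (by omega)
          simp only [Fin.cases_succ]; exact htop p q hpq
    · intro i
      induction i using Fin.cases with
      | zero => simpa using zero_rlt_elt (zero_mem_Bset a one) one (g 0 * (a * a)) j0
      | succ p => simpa using zero_rlt_elt (zero_mem_Bset a one) one (g p) one

/-- Part 2, upper bound. -/
lemma chainB_to_A (n : ℕ)
    (h : HasRChain (Bset a one) (Bset a one : Set (Brandt S I)) (n + 2)) :
    HasRChain (Aset a) (Aset a : Set S) n := by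
  obtain ⟨f, hmem, hch⟩ := h
  have h01 : (0 : Fin (n + 2)) < 1 := Fin.lt_def.mpr (by simp)
  have hf01 : f 0 ≠ f 1 := by
    intro hcon
    exact (hch 0 1 h01).2 (Or.inl hcon.symm)
  have hform : ∀ i : Fin n, ∃ x, f i.succ.succ = Brandt.elt one x one ∧ x ∈ Aset a := by
    intro i
    have hlt1 : (1 : Fin (n + 2)) < i.succ.succ := Fin.lt_def.mpr (by
      simp only [Fin.val_succ]
      have h1v : ((1 : Fin (n + 2)) : ℕ) = 1 := Fin.val_one n
      omega)
    have hlt0 : (0 : Fin (n + 2)) < i.succ.succ := lt_trans h01 hlt1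
    have hnz : f i.succ.succ ≠ Brandt.zero := by
      intro hcon
      have h1 := hch 1 i.succ.succ hlt1
      rw [hcon] at h1
      have hz : f 1 = Brandt.zero := eq_zero_of_rle_zero h1.1
      exact h1.2 (Or.inl (by rw [hz]))
    rcases memB_cases a one (hmem i.succ.succ) with hcon | hF | ⟨u, l, hF⟩
    · exact absurd hcon hnz
    · exact ⟨a, hF, Or.inl rfl⟩
    · -- need l = one
      by_cases hl : l = one
      · exact ⟨a * u, by rw [hF, hl], Or.inr ⟨u, rfl⟩⟩
      · exfalso
        have hb0 := (hch 0 i.succ.succ hlt0).1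
        have hb1 := (hch 1 i.succ.succ hlt1).1
        rw [hF] at hb0 hb1
        have h0' : f 0 = Brandt.elt one (a * u) l ∨ f 0 = Brandt.zero :=
          rle_snd_ne a one hl hb0
        have h1' : f 1 = Brandt.elt one (a * u) l ∨ f 1 = Brandt.zero :=
          rle_snd_ne a one hl hb1
        have hne0 : f 0 ≠ Brandt.elt one (a * u) l := by
          intro hcon
          exact (hch 0 i.succ.succ hlt0).2 (Or.inl (by rw [hF, hcon]))
        have hne1 : f 1 ≠ Brandt.elt one (a * u) l := by
          intro hcon
          exact (hch 1 i.succ.succ hlt1).2 (Or.inl (by rw [hF, hcon]))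
        rcases h0' with h0' | h0' <;> rcases h1' with h1' | h1'
        · exact hne0 h0'
        · exact hne0 h0'
        · exact hne1 h1'
        · exact hf01 (by rw [h0', h1'])
  choose x hx hxA using hform
  refine ⟨x, hxA, ?_⟩
  intro i j hij
  have hT := hch i.succ.succ j.succ.succ (Fin.lt_def.mpr (by
    simp only [Fin.val_succ]
    exact Nat.add_lt_add_right (Nat.add_lt_add_right (Fin.lt_def.mp hij) 1) 1))
  rw [hx i, hx j] at hT
  constructor
  · rcases hT.1 with h' | ⟨m, hm, h'⟩
    · simp only [Brandt.elt.injEq] at h'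
      exact Or.inl h'.2.1
    · rcases memB_cases a one hm with rfl | rfl | ⟨u, l, rfl⟩
      · rw [Brandt.mul_zero'] at h'; exact absurd h' (fun h => nomatch h)
      · rw [Brandt.elt_mul_elt, if_pos rfl] at h'
        simp only [Brandt.elt.injEq] at h'
        exact Or.inr ⟨a, Or.inl rfl, h'.2.1⟩
      · rw [Brandt.elt_mul_elt, if_pos rfl] at h'
        simp only [Brandt.elt.injEq] at h'
        exact Or.inr ⟨a * u, Or.inr ⟨u, rfl⟩, h'.2.1⟩
  · rintro (h' | ⟨u, hu, h'⟩)
    · exact hT.2 (Or.inl (by rw [h']))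
    · apply hT.2
      refine Or.inr ⟨Brandt.elt one u one, memB_of_A_one a one hu, ?_⟩
      rw [Brandt.elt_mul_elt, if_pos rfl, h']

end PrincipalChains

/-- Let `S` have finite `R`-height, let `A = aS¹` be a principal
right ideal of `S`, let `|I| ≥ 2`, and let `T = 𝓑(S, I)` be the Brandt extension of
`S` by `I`.  For a fixed `one ∈ I` and the principal right ideal
`B = (one, a, one)T¹` of `T`, we have `H_R(T) = H_R(S) + 1` and
`H_R(B) = H_R(A) + 2`. -/
theorem brandt_extension_rheight {S I : Type*} [Semigroup S] [DecidableEq I]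
    (hfin : RHeight (Set.univ : Set S) ≠ ⊤)
    (a : S) (hI : ∃ i j : I, i ≠ j) (one : I) :
    RHeight (Set.univ : Set (Brandt S I)) = RHeight (Set.univ : Set S) + 1 ∧
    RHeight {x : Brandt S I | x = Brandt.elt one a one ∨
        ∃ t : Brandt S I, x = Brandt.elt one a one * t} =
      RHeight {x : S | x = a ∨ ∃ s : S, x = a * s} + 2 := by
  obtain ⟨i0, j0', hij0⟩ := hI
  have hj0' : ∃ j0 : I, ¬ j0 = one := by
    by_cases h : i0 = one
    · exact ⟨j0', fun hh => hij0 (h.trans hh.symm)⟩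
    · exact ⟨i0, h⟩
  obtain ⟨j0, hj0⟩ := hj0'
  constructor
  · have := sup_shift (fun n => HasRChain (Set.univ : Set S) Set.univ n)
      (fun n => HasRChain (Set.univ : Set (Brandt S I)) Set.univ n) 1
      (hasRChain_zero' _ _) (fun hmn hp => hasRChain_mono' hmn hp)
      (chainS_to_T one) chainT_to_S
    simpa [RHeight] using this
  · have := sup_shift (fun n => HasRChain (Aset a) (Aset a) n)
      (fun n => HasRChain (Bset a one : Set (Brandt S I)) (Bset a one) n) 2
      (hasRChain_zero' _ _) (fun hmn hp => hasRChain_mono' hmn hp)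
      (chainA_to_B a one hj0) (chainB_to_A a one)
    simpa [RHeight, Aset, Bset] using this
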